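/- arXiv:2505.00785 — 4 statements merged into one kernel-verified Lean document; each statement's English description precedes it below -/
import Mathlib

section
/- Under the same setup, MSC(X,Y) ≤ min{a,b} − 1. Moreover (assuming without loss of generality a ≥ b), equality MSC(X,Y) = b − 1 holds if and only if for every i there exists some j with p_{ij} = p_{i·}, i.e., each row of the contingency table contains exactly one nonzero entry. -/
/-- MSC(X,Y) ≤ min{a,b} − 1, and (for a ≥ b) equality holds iff every
row of the contingency table has a single nonzero entry, i.e. ∀ i ∃ j, p_{ij} = p_{i·}. -/
theorem MSC_attainability (a b : ℕ) (ha : 0 < a) (hb : 0 < b)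
    (p : Fin a → Fin b → ℝ) (hp : ∀ i j, 0 ≤ p i j)
    (hsum : ∑ i, ∑ j, p i j = 1)
    (pr : Fin a → ℝ) (hpr : ∀ i, pr i = ∑ j, p i j) (hprpos : ∀ i, 0 < pr i)
    (pc : Fin b → ℝ) (hpc : ∀ j, pc j = ∑ i, p i j) (hpcpos : ∀ j, 0 < pc j) :
    (∑ i, ∑ j, (p i j - pr i * pc j) ^ 2 / (pr i * pc j) ≤ ((min a b : ℕ) : ℝ) - 1)
    ∧ (b ≤ a →
        ((∑ i, ∑ j, (p i j - pr i * pc j) ^ 2 / (pr i * pc j) = (b : ℝ) - 1)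
          ↔ (∀ i, ∃ j, p i j = pr i))) := by
  have hrj : ∀ i j, p i j ≤ pr i := fun i j => by
    rw [hpr]; exact Finset.single_le_sum (fun j _ => hp i j) (Finset.mem_univ j)
  have hci : ∀ i j, p i j ≤ pc j := fun i j => by
    rw [hpc]; exact Finset.single_le_sum (fun i _ => hp i j) (Finset.mem_univ i)
  have hr1 : ∑ i, pr i = 1 := by simp only [hpr]; exact hsum
  have hc1 : ∑ j, pc j = 1 := by
    simp only [hpc]; rw [Finset.sum_comm]; exact hsum
  set S := ∑ i, ∑ j, (p i j) ^ 2 / (pr i * pc j) with hS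
  have hMSC : ∑ i, ∑ j, (p i j - pr i * pc j) ^ 2 / (pr i * pc j) = S - 1 := by
    have hterm : ∀ i j, (p i j - pr i * pc j) ^ 2 / (pr i * pc j)
        = (p i j) ^ 2 / (pr i * pc j) - 2 * p i j + pr i * pc j := by
      intro i j
      have h1 := (hprpos i).ne'
      have h2 := (hpcpos j).ne'
      field_simp
      ring
    have h2 : ∑ i, ∑ j, 2 * p i j = 2 := by
      simp only [← Finset.mul_sum, hsum]; norm_num
    have h3 : ∑ i, ∑ j, pr i * pc j = 1 := by
      simp only [← Finset.mul_sum, hc1, mul_one, hr1]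
    simp only [hterm, Finset.sum_add_distrib, Finset.sum_sub_distrib, h2, h3, ← hS]
    push_cast
    linarith [h2, h3]
  have hptwb : ∀ i j, (p i j) ^ 2 / (pr i * pc j) ≤ p i j / pc j := fun i j => by
    rw [div_le_div_iff₀ (mul_pos (hprpos i) (hpcpos j)) (hpcpos j)]
    nlinarith [mul_nonneg (mul_nonneg (hp i j) (sub_nonneg.mpr (hrj i j))) (hpcpos j).le]
  have hptwa : ∀ i j, (p i j) ^ 2 / (pr i * pc j) ≤ p i j / pr i := fun i j => by
    rw [div_le_div_iff₀ (mul_pos (hprpos i) (hpcpos j)) (hprpos i)]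
    nlinarith [mul_nonneg (mul_nonneg (hp i j) (sub_nonneg.mpr (hci i j))) (hprpos i).le]
  have hTsumb : ∑ i, ∑ j, p i j / pc j = (b : ℝ) := by
    rw [Finset.sum_comm]
    have h : ∀ j, ∑ i, p i j / pc j = 1 := fun j => by
      rw [← Finset.sum_div, ← hpc, div_self (hpcpos j).ne']
    simp [h]
  have hTsuma : ∑ i, ∑ j, p i j / pr i = (a : ℝ) := by
    have h : ∀ i, ∑ j, p i j / pr i = 1 := fun i => by
      rw [← Finset.sum_div, ← hpr, div_self (hprpos i).ne']
    simp [h]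
  have hSb : S ≤ (b : ℝ) := by
    rw [← hTsumb]
    exact Finset.sum_le_sum (fun i _ => Finset.sum_le_sum (fun j _ => hptwb i j))
  have hSa : S ≤ (a : ℝ) := by
    rw [← hTsuma]
    exact Finset.sum_le_sum (fun i _ => Finset.sum_le_sum (fun j _ => hptwa i j))
  constructor
  · rw [hMSC]
    have hcast : ((min a b : ℕ) : ℝ) = min (a : ℝ) (b : ℝ) := by
      simp [Nat.cast_min]
    rw [hcast]
    have := le_min hSa hSb
    linarith
  · intro hba
    rw [hMSC]
    constructor
    · intro hEq
      have hSeq : S = (b : ℝ) := by linarith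
      have hsums : ∑ i, ∑ j, (p i j) ^ 2 / (pr i * pc j) = ∑ i, ∑ j, p i j / pc j := by
        rw [← hS, hSeq, hTsumb]
      have step1 := (Finset.sum_eq_sum_iff_of_le
        (fun i (_ : i ∈ Finset.univ) => Finset.sum_le_sum (fun j _ => hptwb i j))).mp hsums
      intro i
      have step2 := (Finset.sum_eq_sum_iff_of_le
        (fun j (_ : j ∈ Finset.univ) => hptwb i j)).mp (step1 i (Finset.mem_univ i))
      have hx : ∀ j, p i j = 0 ∨ p i j = pr i := by
        intro j
        have h := step2 j (Finset.mem_univ j)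
        have h1 := (hprpos i).ne'
        have h2 := (hpcpos j).ne'
        have h' : p i j * (p i j - pr i) = 0 := by
          field_simp at h
          nlinarith [h, hpcpos j, hprpos i]
        rcases mul_eq_zero.mp h' with h0 | h0
        · exact Or.inl h0
        · exact Or.inr (by linarith)
      by_contra hno
      push_neg at hno
      have hall : ∀ j, p i j = 0 := fun j => (hx j).resolve_right (hno j)
      have : pr i = 0 := by rw [hpr]; simp [hall]
      exact (hprpos i).ne' this
    · intro hrow
      have hzero : ∀ i j, (p i j) ^ 2 / (pr i * pc j) = p i j / pc j := by
        intro i j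
        obtain ⟨j0, hj0⟩ := hrow i
        by_cases hjj : j = j0
        · subst hjj
          rw [hj0]
          have h1 := (hprpos i).ne'
          have h2 := (hpcpos j).ne'
          field_simp
        · have hrest : ∑ k ∈ Finset.univ.erase j0, p i k = 0 := by
            have hadd : p i j0 + ∑ k ∈ Finset.univ.erase j0, p i k = ∑ k, p i k :=
              Finset.add_sum_erase Finset.univ (p i) (Finset.mem_univ j0)
            rw [← hpr i, hj0] at hadd
            linarith
          have h0 : p i j = 0 := by
            have := (Finset.sum_eq_zero_iff_of_nonneg
              (fun k _ => hp i k)).mp hrest j (Finset.mem_erase.mpr ⟨hjj, Finset.mem_univ j⟩)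
            exact this
          simp [h0]
      have : S = (b : ℝ) := by
        rw [hS]
        simp only [hzero]
        exact hTsumb
      rw [this]
end

section
/- For binary random variables X, Y taking values in {0,1}, Kendall's tau satisfies τ^K(X,Y) = 2(P(X=1, Y=1) − P(X=1)P(Y=1)). Consequently, τ^K(X,Y) = 0 if and only if X and Y are independent. -/
open MeasureTheory
open scoped Classical

lemma binary_preimage {Ω : Type*} (X : Ω → ℝ) (hXbin : ∀ ω, X ω = 0 ∨ X ω = 1) (s : Set ℝ) :
    X ⁻¹' s = (if (1:ℝ) ∈ s then {ω | X ω = 1} else ∅)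
      ∪ (if (0:ℝ) ∈ s then {ω | X ω = 1}ᶜ else ∅) := by
  ext ω
  by_cases h1 : (1:ℝ) ∈ s <;> by_cases h0 : (0:ℝ) ∈ s <;>
    rcases hXbin ω with h | h <;> simp [h1, h0, h]

lemma binary_preimage_measurable {Ω : Type*} (X : Ω → ℝ)
    (hXbin : ∀ ω, X ω = 0 ∨ X ω = 1) (s : Set ℝ) :
    MeasurableSet[MeasurableSpace.generateFrom {{ω | X ω = 1}}] (X ⁻¹' s) := by
  letI m : MeasurableSpace Ω := MeasurableSpace.generateFrom {{ω | X ω = 1}}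
  have hAg : MeasurableSet[m] {ω | X ω = 1} :=
    MeasurableSpace.measurableSet_generateFrom rfl
  show MeasurableSet[m] (X ⁻¹' s)
  rw [binary_preimage X hXbin s]
  split_ifs <;>
    exact MeasurableSet.union
      (by first | exact hAg | exact MeasurableSet.empty)
      (by first | exact hAg.compl | exact MeasurableSet.empty)

lemma indep_of_binary {Ω : Type*} [MeasurableSpace Ω] (ℙ : Measure Ω) [IsProbabilityMeasure ℙ]
    (X Y : Ω → ℝ) (hX : Measurable X) (hY : Measurable Y)
    (hXbin : ∀ ω, X ω = 0 ∨ X ω = 1) (hYbin : ∀ ω, Y ω = 0 ∨ Y ω = 1)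
    (hprod : ℙ ({ω | X ω = 1} ∩ {ω | Y ω = 1}) = ℙ {ω | X ω = 1} * ℙ {ω | Y ω = 1}) :
    ProbabilityTheory.IndepFun X Y ℙ := by
  have hA : MeasurableSet {ω | X ω = 1} := hX (measurableSet_singleton 1)
  have hB : MeasurableSet {ω | Y ω = 1} := hY (measurableSet_singleton 1)
  have hABindep : ProbabilityTheory.IndepSet {ω | X ω = 1} {ω | Y ω = 1} ℙ :=
    (ProbabilityTheory.indepSet_iff_measure_inter_eq_mul hA hB ℙ).mpr hprod
  have hind := (ProbabilityTheory.IndepSet_iff _ _ ℙ).mp hABindep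
  rw [ProbabilityTheory.IndepFun_iff_Indep, ProbabilityTheory.Indep_iff]
  intro t1 t2 h1 h2
  obtain ⟨s1, _, rfl⟩ := h1
  obtain ⟨s2, _, rfl⟩ := h2
  exact hind _ _ (binary_preimage_measurable X hXbin s1) (binary_preimage_measurable Y hYbin s2)

/-- For binary X, Y (values in {0,1}), Kendall's tau equals
2(P(X=1,Y=1) − P(X=1)P(Y=1)); consequently τ = 0 iff X and Y are independent. -/
theorem kendall_tau_binary
    {Ω : Type*} [MeasurableSpace Ω] (ℙ : Measure Ω) [IsProbabilityMeasure ℙ]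
    (X Y : Ω → ℝ) (hX : Measurable X) (hY : Measurable Y)
    (hXbin : ∀ ω, X ω = 0 ∨ X ω = 1) (hYbin : ∀ ω, Y ω = 0 ∨ Y ω = 1)
    (D : Ω × Ω → ℝ) (hD : ∀ q, D q = (X q.1 - X q.2) * (Y q.1 - Y q.2))
    (τ : ℝ)
    (hτ : τ = ((ℙ.prod ℙ) {q | 0 < D q}).toReal - ((ℙ.prod ℙ) {q | D q < 0}).toReal) :
    τ = 2 * ((ℙ {ω | X ω = 1 ∧ Y ω = 1}).toReal
          - (ℙ {ω | X ω = 1}).toReal * (ℙ {ω | Y ω = 1}).toReal)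
    ∧ (τ = 0 ↔ ProbabilityTheory.IndepFun X Y ℙ) := by
  have hA : MeasurableSet {ω | X ω = 1} := hX (measurableSet_singleton 1)
  have hB : MeasurableSet {ω | Y ω = 1} := hY (measurableSet_singleton 1)
  set A := {ω | X ω = 1} with hAdef
  set B := {ω | Y ω = 1} with hBdef
  -- set identities
  have hpos : {q : Ω × Ω | 0 < D q} = (A ∩ B) ×ˢ (Aᶜ ∩ Bᶜ) ∪ (Aᶜ ∩ Bᶜ) ×ˢ (A ∩ B) := by
    ext q
    simp only [Set.mem_setOf_eq, hD q, Set.mem_union, Set.mem_prod, Set.mem_inter_iff,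
      Set.mem_compl_iff, hAdef, hBdef]
    rcases hXbin q.1 with h1 | h1 <;> rcases hXbin q.2 with h2 | h2 <;>
      rcases hYbin q.1 with h3 | h3 <;> rcases hYbin q.2 with h4 | h4 <;>
      rw [h1, h2, h3, h4] <;> norm_num
  have hneg : {q : Ω × Ω | D q < 0} = (A ∩ Bᶜ) ×ˢ (Aᶜ ∩ B) ∪ (Aᶜ ∩ B) ×ˢ (A ∩ Bᶜ) := by
    ext q
    simp only [Set.mem_setOf_eq, hD q, Set.mem_union, Set.mem_prod, Set.mem_inter_iff,
      Set.mem_compl_iff, hAdef, hBdef]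
    rcases hXbin q.1 with h1 | h1 <;> rcases hXbin q.2 with h2 | h2 <;>
      rcases hYbin q.1 with h3 | h3 <;> rcases hYbin q.2 with h4 | h4 <;>
      rw [h1, h2, h3, h4] <;> norm_num
  have hdisj1 : Disjoint ((A ∩ B) ×ˢ (Aᶜ ∩ Bᶜ)) ((Aᶜ ∩ Bᶜ) ×ˢ (A ∩ B)) := by
    rw [Set.disjoint_left]
    rintro ⟨ω₁, ω₂⟩ ⟨⟨hA1, -⟩, -⟩ ⟨⟨hA1', -⟩, -⟩
    exact hA1' hA1
  have hdisj2 : Disjoint ((A ∩ Bᶜ) ×ˢ (Aᶜ ∩ B)) ((Aᶜ ∩ B) ×ˢ (A ∩ Bᶜ)) := by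
    rw [Set.disjoint_left]
    rintro ⟨ω₁, ω₂⟩ ⟨⟨hA1, -⟩, -⟩ ⟨⟨hA1', -⟩, -⟩
    exact hA1' hA1
  have hposm : (ℙ.prod ℙ) {q : Ω × Ω | 0 < D q}
      = ℙ (A ∩ B) * ℙ (Aᶜ ∩ Bᶜ) + ℙ (Aᶜ ∩ Bᶜ) * ℙ (A ∩ B) := by
    rw [hpos, measure_union hdisj1 ((hA.compl.inter hB.compl).prod (hA.inter hB)),
      Measure.prod_prod, Measure.prod_prod]
  have hnegm : (ℙ.prod ℙ) {q : Ω × Ω | D q < 0}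
      = ℙ (A ∩ Bᶜ) * ℙ (Aᶜ ∩ B) + ℙ (Aᶜ ∩ B) * ℙ (A ∩ Bᶜ) := by
    rw [hneg, measure_union hdisj2 ((hA.compl.inter hB).prod (hA.inter hB.compl)),
      Measure.prod_prod, Measure.prod_prod]
  -- real quantities
  set a := (ℙ (A ∩ B)).toReal with ha
  set b := (ℙ (A ∩ Bᶜ)).toReal with hb
  set c := (ℙ (Aᶜ ∩ B)).toReal with hc
  set d := (ℙ (Aᶜ ∩ Bᶜ)).toReal with hd'
  have hPa : (ℙ A).toReal = a + b := by
    rw [ha, hb, ← ENNReal.toReal_add (measure_ne_top _ _) (measure_ne_top _ _),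
      ← Set.diff_eq, measure_inter_add_diff A hB]
  have hPb : (ℙ B).toReal = a + c := by
    rw [ha, hc, Set.inter_comm A B, Set.inter_comm Aᶜ B,
      ← ENNReal.toReal_add (measure_ne_top _ _) (measure_ne_top _ _),
      ← Set.diff_eq, measure_inter_add_diff B hA]
  have hPac : (ℙ Aᶜ).toReal = c + d := by
    rw [hc, hd', ← ENNReal.toReal_add (measure_ne_top _ _) (measure_ne_top _ _),
      ← Set.diff_eq, measure_inter_add_diff Aᶜ hB]
  have hone : a + b + (c + d) = 1 := by
    rw [← hPa, ← hPac, ← ENNReal.toReal_add (measure_ne_top _ _) (measure_ne_top _ _),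
      measure_add_measure_compl hA, measure_univ, ENNReal.toReal_one]
  have hsetAB : {ω | X ω = 1 ∧ Y ω = 1} = A ∩ B := rfl
  have hposr : ((ℙ.prod ℙ) {q : Ω × Ω | 0 < D q}).toReal = a * d + d * a := by
    rw [hposm, ENNReal.toReal_add (by finiteness) (by finiteness), ENNReal.toReal_mul,
      ENNReal.toReal_mul, ha, hd']
  have hnegr : ((ℙ.prod ℙ) {q : Ω × Ω | D q < 0}).toReal = b * c + c * b := by
    rw [hnegm, ENNReal.toReal_add (by finiteness) (by finiteness), ENNReal.toReal_mul,
      ENNReal.toReal_mul, hb, hc]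
  have hmain : τ = 2 * ((ℙ {ω | X ω = 1 ∧ Y ω = 1}).toReal
      - (ℙ {ω | X ω = 1}).toReal * (ℙ {ω | Y ω = 1}).toReal) := by
    rw [hτ, hposr, hnegr, hsetAB, ← hAdef, ← hBdef, ← ha, hPa, hPb]
    linear_combination (2 * a) * hone
  refine ⟨hmain, ?_⟩
  constructor
  · intro hτ0
    have hreal : a = (ℙ A).toReal * (ℙ B).toReal := by
      have h2 : (ℙ {ω | X ω = 1 ∧ Y ω = 1}).toReal
          = (ℙ {ω | X ω = 1}).toReal * (ℙ {ω | Y ω = 1}).toReal := by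
        rw [hmain] at hτ0; linarith
      rw [hsetAB, ← hAdef, ← hBdef] at h2
      exact h2
    have hENN : ℙ (A ∩ B) = ℙ A * ℙ B := by
      have h1 : (ℙ (A ∩ B)).toReal = (ℙ A * ℙ B).toReal := by
        rw [ENNReal.toReal_mul]; exact hreal
      exact (ENNReal.toReal_eq_toReal_iff' (measure_ne_top _ _) (by finiteness)).mp h1
    exact indep_of_binary ℙ X Y hX hY hXbin hYbin hENN
  · intro hindep
    have hENN := hindep.measure_inter_preimage_eq_mul {1} {1}
      (measurableSet_singleton 1) (measurableSet_singleton 1)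
    have hpre : X ⁻¹' {1} = A := rfl
    have hpre' : Y ⁻¹' {1} = B := rfl
    rw [hpre, hpre'] at hENN
    have hreal : a = (ℙ A).toReal * (ℙ B).toReal := by
      rw [ha, hENN, ENNReal.toReal_mul]
    rw [hmain, hsetAB, ← hAdef, ← hBdef, ← ha, hreal]
    ring
end

section
/- Let X, Y be discrete random variables with finite supports of sizes a ≥ 2 and b ≥ 2 and strictly positive marginal probabilities. If for every pair of bijective relabelings (s_a, s_b) of the values of X and Y into {1,…,a} and {1,…,b}, Goodman–Kruskal's gamma γ(X^{s_a}, Y^{s_b}) = 0, then X and Y are independent. -/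
open MeasureTheory

namespace GKaux

/-- sign of `u - v` on `Fin n`. -/
noncomputable def esgn {n : ℕ} (u v : Fin n) : ℝ :=
  if v < u then 1 else if u < v then -1 else 0

lemma esgn_antisymm {n : ℕ} (u v : Fin n) : esgn u v = - esgn v u := by
  unfold esgn
  rcases lt_trichotomy u v with h | h | h
  · simp [h, not_lt_of_gt h]
  · simp [h, lt_irrefl]
  · simp [h, not_lt_of_gt h]

lemma esgn_congr {n : ℕ} {u v u' v' : Fin n}
    (h1 : ((v : ℕ) < (u : ℕ)) ↔ ((v' : ℕ) < (u' : ℕ)))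
    (h2 : ((u : ℕ) < (v : ℕ)) ↔ ((u' : ℕ) < (v' : ℕ))) : esgn u v = esgn u' v' := by
  unfold esgn
  simp only [Fin.lt_def, h1, h2]

lemma esgn_swap01 {n : ℕ} (c0 c1 : Fin n) (hc : (c0 : ℕ) = 0) (hc1 : (c1 : ℕ) = 1)
    (u v : Fin n) (h1 : ¬(u = c0 ∧ v = c1)) (h2 : ¬(u = c1 ∧ v = c0)) :
    esgn (Equiv.swap c0 c1 u) (Equiv.swap c0 c1 v) = esgn u v := by
  have hcne : c0 ≠ c1 := by intro h; rw [h, hc1] at hc; omega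
  have cond0 : ∀ w : Fin n, (w = c0) = ((w : ℕ) = 0) := fun w =>
    propext (by rw [Fin.ext_iff, hc])
  have cond1 : ∀ w : Fin n, (w = c1) = ((w : ℕ) = 1) := fun w =>
    propext (by rw [Fin.ext_iff, hc1])
  have hswap : ∀ w : Fin n, ((Equiv.swap c0 c1 w : Fin n) : ℕ)
      = if (w : ℕ) = 0 then 1 else if (w : ℕ) = 1 then 0 else (w : ℕ) := by
    intro w
    rcases eq_or_ne w c0 with h | h
    · subst h; rw [Equiv.swap_apply_left, if_pos hc, hc1]
    · rcases eq_or_ne w c1 with h' | h'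
      · subst h'; rw [Equiv.swap_apply_right, hc]
        rw [if_neg, if_pos hc1]
        rw [hc1]; omega
      · rw [Equiv.swap_apply_of_ne_of_ne h h', if_neg, if_neg]
        · rw [← hc1]; exact fun hh => h' (Fin.ext hh)
        · rw [← hc]; exact fun hh => h (Fin.ext hh)
  rw [cond0, cond1] at h1
  rw [cond1, cond0] at h2
  exact esgn_congr (by rw [hswap u, hswap v]; split_ifs <;> omega)
    (by rw [hswap u, hswap v]; split_ifs <;> omega)

/-- Core cancellation lemma: if the sign-weighted double sum vanishes for all
permutations, then `g` is symmetric off the diagonal. -/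
lemma key_cancel {n : ℕ} (g : Fin n → Fin n → ℝ)
    (h : ∀ σ : Equiv.Perm (Fin n), ∑ x : Fin n, ∑ y : Fin n, esgn (σ x) (σ y) * g x y = 0)
    {j0 j1 : Fin n} (hne : j0 ≠ j1) : g j0 j1 = g j1 j0 := by
  have hn : 2 ≤ n := by
    have h0 := j0.isLt; have h1 := j1.isLt
    have : (j0 : ℕ) ≠ (j1 : ℕ) := fun hh => hne (Fin.ext hh)
    omega
  set c0 : Fin n := ⟨0, by omega⟩ with hc0def
  set c1 : Fin n := ⟨1, by omega⟩ with hc1def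
  have hcne : c0 ≠ c1 := by simp [c0, c1, Fin.ext_iff]
  have hc01 : c0 < c1 := by simp [c0, c1, Fin.lt_def]
  set σ1 : Equiv.Perm (Fin n) := Equiv.swap c0 j0 with hσ1def
  set j1' : Fin n := σ1 j1 with hj1'def
  have hσ1j0 : σ1 j0 = c0 := Equiv.swap_apply_right _ _
  have hj1'0 : j1' ≠ c0 := by
    rw [hj1'def, ← hσ1j0]
    exact fun hh => (hne (σ1.injective hh).symm).elim
  set σ : Equiv.Perm (Fin n) := (Equiv.swap c1 j1') * σ1 with hσdef
  have hσj0 : σ j0 = c0 := by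
    rw [hσdef, Equiv.Perm.mul_apply, hσ1j0,
      Equiv.swap_apply_of_ne_of_ne hcne (Ne.symm hj1'0)]
  have hσj1 : σ j1 = c1 := by
    rw [hσdef, Equiv.Perm.mul_apply, ← hj1'def, Equiv.swap_apply_right]
  set τ : Equiv.Perm (Fin n) := Equiv.swap c0 c1 with hτdef
  set F : Fin n → Fin n → ℝ :=
    fun x y => (esgn ((τ * σ) x) ((τ * σ) y) - esgn (σ x) (σ y)) * g x y with hFdef
  have e1 : esgn c1 c0 = 1 := by simp [esgn, hc01, not_lt_of_gt hc01]
  have e2 : esgn c0 c1 = -1 := by simp [esgn, hc01, not_lt_of_gt hc01]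
  have hF : ∀ x y : Fin n, F x y =
      (if (x, y) = (j0, j1) then 2 * g j0 j1 else 0) +
        (if (x, y) = (j1, j0) then -2 * g j1 j0 else 0) := by
    intro x y
    rcases eq_or_ne (x, y) (j0, j1) with hxy | hxy
    · have hx : x = j0 := (Prod.mk.injEq _ _ _ _ ▸ hxy).1
      have hy : y = j1 := (Prod.mk.injEq _ _ _ _ ▸ hxy).2
      rw [hx, hy]
      have hne' : (j0, j1) ≠ (j1, j0) := by
        intro hh; exact hne ((Prod.mk.injEq _ _ _ _ ▸ hh).1)
      rw [if_pos rfl, if_neg hne']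
      simp only [hFdef, Equiv.Perm.mul_apply, hσj0, hσj1, hτdef,
        Equiv.swap_apply_left, Equiv.swap_apply_right]
      rw [e1, e2]; ring
    · rcases eq_or_ne (x, y) (j1, j0) with hxy2 | hxy2
      · have hx : x = j1 := (Prod.mk.injEq _ _ _ _ ▸ hxy2).1
        have hy : y = j0 := (Prod.mk.injEq _ _ _ _ ▸ hxy2).2
        rw [hx, hy]
        rw [if_neg (fun hh => hne ((Prod.mk.injEq _ _ _ _ ▸ hh).2)), if_pos rfl]
        simp only [hFdef, Equiv.Perm.mul_apply, hσj0, hσj1, hτdef,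
          Equiv.swap_apply_left, Equiv.swap_apply_right]
        rw [e1, e2]; ring
      · rw [if_neg hxy, if_neg hxy2]
        have h1 : ¬(σ x = c0 ∧ σ y = c1) := by
          rintro ⟨hh1, hh2⟩
          exact hxy (by
            rw [← hσj0] at hh1; rw [← hσj1] at hh2
            exact Prod.ext (σ.injective hh1) (σ.injective hh2))
        have h2 : ¬(σ x = c1 ∧ σ y = c0) := by
          rintro ⟨hh1, hh2⟩
          exact hxy2 (by
            rw [← hσj1] at hh1; rw [← hσj0] at hh2
            exact Prod.ext (σ.injective hh1) (σ.injective hh2))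
        simp only [hFdef, Equiv.Perm.mul_apply, hτdef]
        rw [esgn_swap01 c0 c1 rfl rfl _ _ h1 h2]
        ring
  have hsum0 : ∑ x : Fin n, ∑ y : Fin n, F x y = 0 := by
    simp only [hFdef, sub_mul, Finset.sum_sub_distrib]
    rw [h (τ * σ), h σ]
    norm_num
  have hsum1 : ∑ x : Fin n, ∑ y : Fin n, F x y
      = 2 * g j0 j1 + -2 * g j1 j0 := by
    rw [← Fintype.sum_prod_type']
    calc ∑ p : Fin n × Fin n, F p.1 p.2
        = ∑ p : Fin n × Fin n,
          ((if p = (j0, j1) then 2 * g j0 j1 else 0) +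
            (if p = (j1, j0) then -2 * g j1 j0 else 0)) := by
          refine Finset.sum_congr rfl fun p _ => ?_
          rw [hF p.1 p.2]
      _ = 2 * g j0 j1 + -2 * g j1 j0 := by
          rw [Finset.sum_add_distrib, Finset.sum_ite_eq' Finset.univ (j0, j1),
            Finset.sum_ite_eq' Finset.univ (j1, j0)]
          simp
  rw [hsum0] at hsum1
  linarith

noncomputable def rsgn (x : ℝ) : ℝ := if 0 < x then 1 else if x < 0 then -1 else 0

lemma rsgn_mul (x y : ℝ) : rsgn (x * y) = rsgn x * rsgn y := by
  unfold rsgn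
  rcases lt_trichotomy 0 x with hx | hx | hx
  · rcases lt_trichotomy 0 y with hy | hy | hy
    · rw [if_pos (mul_pos hx hy), if_pos hx, if_pos hy]; norm_num
    · rw [← hy, mul_zero]; simp [lt_irrefl]
    · have h := mul_neg_of_pos_of_neg hx hy
      rw [if_neg (asymm h), if_pos h, if_pos hx, if_neg (asymm hy), if_pos hy]; norm_num
  · rw [← hx, zero_mul]; simp [lt_irrefl]
  · rcases lt_trichotomy 0 y with hy | hy | hy
    · have h := mul_neg_of_neg_of_pos hx hy
      rw [if_neg (asymm h), if_pos h, if_neg (asymm hx), if_pos hx, if_pos hy]; norm_num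
    · rw [← hy, mul_zero]; simp [lt_irrefl]
    · have h := mul_pos_of_neg_of_neg hx hy
      rw [if_pos h, if_neg (asymm hx), if_pos hx, if_neg (asymm hy), if_pos hy]; norm_num

lemma esgn_eq_rsgn {n : ℕ} (u v : Fin n) :
    esgn u v = rsgn (((u : ℕ) : ℝ) - ((v : ℕ) : ℝ)) := by
  unfold esgn rsgn
  rcases lt_trichotomy u v with h | h | h
  · rw [Fin.lt_def] at h
    have h1 : ((u : ℕ) : ℝ) - ((v : ℕ) : ℝ) < 0 := by
      have := (Nat.cast_lt (α := ℝ)).mpr h; linarith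
    rw [if_neg (by rw [Fin.lt_def]; omega), if_pos (by rw [Fin.lt_def]; omega),
      if_neg (by linarith), if_pos h1]
  · subst h
    simp
  · rw [Fin.lt_def] at h
    have h1 : 0 < ((u : ℕ) : ℝ) - ((v : ℕ) : ℝ) := by
      have := (Nat.cast_lt (α := ℝ)).mpr h; linarith
    rw [if_pos (by rw [Fin.lt_def]; omega), if_pos h1]

lemma bridge {n m : ℕ} (u u' : Fin n) (v v' : Fin m) :
    (if 0 < (((u : ℕ) : ℝ) - ((u' : ℕ) : ℝ)) * (((v : ℕ) : ℝ) - ((v' : ℕ) : ℝ)) then (1:ℝ) else 0)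
      - (if (((u : ℕ) : ℝ) - ((u' : ℕ) : ℝ)) * (((v : ℕ) : ℝ) - ((v' : ℕ) : ℝ)) < 0 then (1:ℝ) else 0)
      = esgn u u' * esgn v v' := by
  rw [esgn_eq_rsgn, esgn_eq_rsgn, ← rsgn_mul]
  unfold rsgn
  rcases lt_trichotomy 0 ((((u : ℕ) : ℝ) - ((u' : ℕ) : ℝ)) * (((v : ℕ) : ℝ) - ((v' : ℕ) : ℝ)))
    with h | h | h <;> split_ifs <;> (first | linarith | norm_num)

section Meas

variable {Ω : Type*} [MeasurableSpace Ω] (ℙ : Measure Ω) [IsProbabilityMeasure ℙ]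
  {a b : ℕ} (X : Ω → Fin a) (Y : Ω → Fin b)

/-- the joint cell `{X = i, Y = j}`. -/
def cell (i : Fin a) (j : Fin b) : Set Ω := {ω | X ω = i ∧ Y ω = j}

variable (hX : Measurable X) (hY : Measurable Y)

set_option linter.unusedSectionVars false

lemma cell_eq (i : Fin a) (j : Fin b) :
    cell X Y i j = X ⁻¹' {i} ∩ Y ⁻¹' {j} := by
  ext ω; simp [cell]

include hX hY

lemma measurable_cell (i : Fin a) (j : Fin b) : MeasurableSet (cell X Y i j) := by
  rw [cell_eq]
  exact (hX (measurableSet_singleton i)).inter (hY (measurableSet_singleton j))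

/-- decomposition of a product-space event defined through the discrete values. -/
lemma measure_cond (c : Fin a → Fin b → Fin a → Fin b → Prop)
    [∀ i j k l, Decidable (c i j k l)] :
    (ℙ.prod ℙ) {q : Ω × Ω | c (X q.1) (Y q.1) (X q.2) (Y q.2)}
      = ∑ u : (Fin a × Fin b) × (Fin a × Fin b),
          if c u.1.1 u.1.2 u.2.1 u.2.2
          then ℙ (cell X Y u.1.1 u.1.2) * ℙ (cell X Y u.2.1 u.2.2) else 0 := by
  classical
  set s : Finset ((Fin a × Fin b) × (Fin a × Fin b)) :=
    Finset.univ.filter fun u => c u.1.1 u.1.2 u.2.1 u.2.2 with hs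
  have hset : {q : Ω × Ω | c (X q.1) (Y q.1) (X q.2) (Y q.2)}
      = ⋃ u ∈ s, (cell X Y u.1.1 u.1.2) ×ˢ (cell X Y u.2.1 u.2.2) := by
    ext q
    simp only [Set.mem_setOf_eq, Set.mem_iUnion, Set.mem_prod, hs, Finset.mem_filter,
      Finset.mem_univ, true_and, cell, Set.mem_setOf_eq]
    constructor
    · intro h
      exact ⟨((X q.1, Y q.1), (X q.2, Y q.2)), h, ⟨rfl, rfl⟩, ⟨rfl, rfl⟩⟩
    · rintro ⟨u, hu, ⟨h1, h2⟩, h3, h4⟩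
      rw [← h1, ← h2] at hu
      rw [← h3, ← h4] at hu
      exact hu
  rw [hset, measure_biUnion_finset]
  · rw [hs, Finset.sum_filter]
    refine Finset.sum_congr rfl fun u _ => ?_
    split_ifs with h
    · exact Measure.prod_prod _ _
    · rfl
  · intro u hu v hv huv
    have : u.1.1 ≠ v.1.1 ∨ u.1.2 ≠ v.1.2 ∨ u.2.1 ≠ v.2.1 ∨ u.2.2 ≠ v.2.2 := by
      by_contra hcon
      push_neg at hcon
      exact huv (Prod.ext (Prod.ext hcon.1 hcon.2.1) (Prod.ext hcon.2.2.1 hcon.2.2.2))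
    have hdisj : ∀ (i i' : Fin a) (j j' : Fin b), i ≠ i' ∨ j ≠ j' →
        Disjoint (cell X Y i j) (cell X Y i' j') := by
      intro i i' j j' hij
      rw [Set.disjoint_left]
      rintro ω ⟨h1, h2⟩ ⟨h3, h4⟩
      rcases hij with h | h
      · exact h (h1 ▸ h3 ▸ rfl)
      · exact h (h2 ▸ h4 ▸ rfl)
    rw [Function.onFun, Set.disjoint_prod]
    rcases this with h | h | h | h
    · exact Or.inl (hdisj _ _ _ _ (Or.inl h))
    · exact Or.inl (hdisj _ _ _ _ (Or.inr h))
    · exact Or.inr (hdisj _ _ _ _ (Or.inl h))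
    · exact Or.inr (hdisj _ _ _ _ (Or.inr h))
  · intro u hu
    exact (measurable_cell X Y hX hY _ _).prod (measurable_cell X Y hX hY _ _)

/-- row marginal. -/
lemma row_marginal (i : Fin a) :
    ℙ {ω | X ω = i} = ∑ j : Fin b, ℙ (cell X Y i j) := by
  classical
  have hset : {ω | X ω = i} = ⋃ j ∈ (Finset.univ : Finset (Fin b)), cell X Y i j := by
    ext ω
    simp [cell]
  rw [hset, measure_biUnion_finset]
  · intro u _ v _ huv
    rw [Function.onFun, Set.disjoint_left]
    rintro ω ⟨h1, h2⟩ ⟨h3, h4⟩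
    exact huv (h2 ▸ h4 ▸ rfl)
  · intro j _; exact measurable_cell X Y hX hY _ _

lemma col_marginal (j : Fin b) :
    ℙ {ω | Y ω = j} = ∑ i : Fin a, ℙ (cell X Y i j) := by
  classical
  have hset : {ω | Y ω = j} = ⋃ i ∈ (Finset.univ : Finset (Fin a)), cell X Y i j := by
    ext ω
    simp [cell]
  rw [hset, measure_biUnion_finset]
  · intro u _ v _ huv
    rw [Function.onFun, Set.disjoint_left]
    rintro ω ⟨h1, h2⟩ ⟨h3, h4⟩
    exact huv (h1 ▸ h3 ▸ rfl)
  · intro i _; exact measurable_cell X Y hX hY _ _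

lemma total_one : ∑ i : Fin a, ∑ j : Fin b, ℙ (cell X Y i j) = 1 := by
  classical
  have h1 : ∑ i : Fin a, ∑ j : Fin b, ℙ (cell X Y i j)
      = ∑ i : Fin a, ℙ {ω | X ω = i} := by
    refine Finset.sum_congr rfl fun i _ => (row_marginal ℙ X Y hX hY i).symm
  rw [h1]
  have hset : (Set.univ : Set Ω) = ⋃ i ∈ (Finset.univ : Finset (Fin a)), {ω | X ω = i} := by
    ext ω; simp
  have h2 := measure_biUnion_finset (μ := ℙ)
    (s := (Finset.univ : Finset (Fin a))) (f := fun i => {ω | X ω = i})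
    (by
      intro u _ v _ huv
      rw [Function.onFun, Set.disjoint_left]
      rintro ω h1 h3
      exact huv ((h1 : X ω = u) ▸ (h3 : X ω = v) ▸ rfl))
    (fun i _ => hX (measurableSet_singleton i))
  rw [← h2, ← hset, measure_univ]

end Meas

lemma meas_fiber {Ω α : Type*} [MeasurableSpace Ω] (ℙ : Measure Ω) [Fintype α]
    [MeasurableSpace α] [MeasurableSingletonClass α] (Z : Ω → α) (hZ : Measurable Z)
    (s : Set α) [DecidablePred (· ∈ s)] :
    ℙ (Z ⁻¹' s) = ∑ i : α, if i ∈ s then ℙ (Z ⁻¹' {i}) else 0 := by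
  classical
  have hset : Z ⁻¹' s = ⋃ i ∈ Finset.univ.filter (· ∈ s), Z ⁻¹' {i} := by
    ext ω; simp
  rw [hset, measure_biUnion_finset]
  · rw [Finset.sum_filter]
  · intro u _ v _ huv
    rw [Function.onFun, Set.disjoint_left]
    rintro ω h1 h2
    simp only [Set.mem_preimage, Set.mem_singleton_iff] at h1 h2
    exact huv (h1 ▸ h2 ▸ rfl)
  · intro i _; exact hZ (measurableSet_singleton i)

/-- reshaping a sum over pairs of pairs into a quadruple sum. -/
lemma reshape {a b : ℕ} (F : Fin a → Fin b → Fin a → Fin b → ℝ) :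
    ∑ u : (Fin a × Fin b) × (Fin a × Fin b), F u.1.1 u.1.2 u.2.1 u.2.2
      = ∑ i, ∑ j, ∑ k, ∑ l, F i j k l := by
  rw [Fintype.sum_prod_type]
  rw [show (∑ x : Fin a × Fin b, ∑ y : Fin a × Fin b, F x.1 x.2 y.1 y.2)
      = ∑ x : Fin a × Fin b, ∑ k, ∑ l, F x.1 x.2 k l from
    Finset.sum_congr rfl fun x _ => Fintype.sum_prod_type _]
  exact Fintype.sum_prod_type _

end GKaux

/-- The concordance kernel of the numbered pair (X^{s_a}, Y^{s_b}) evaluated on a pair of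
outcomes: (X^{s_a} − X̃^{s_a})(Y^{s_b} − Ỹ^{s_b}). -/
def concKernel {Ω : Type*} {a b : ℕ} (X : Ω → Fin a) (Y : Ω → Fin b)
    (sa : Equiv.Perm (Fin a)) (sb : Equiv.Perm (Fin b)) (q : Ω × Ω) : ℝ :=
  (((sa (X q.1) : ℕ) : ℝ) - ((sa (X q.2) : ℕ) : ℝ))
    * (((sb (Y q.1) : ℕ) : ℝ) - ((sb (Y q.2) : ℕ) : ℝ))

/-- Goodman–Kruskal's gamma, computed from a concordance kernel `D` on the product space
(the independent copy construction): γ = (P(D>0) − P(D<0)) / (1 − P(D=0)). -/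
noncomputable def gammaOf {Ω : Type*} [MeasurableSpace Ω] (ℙ : Measure Ω)
    (D : Ω × Ω → ℝ) : ℝ :=
  (((ℙ.prod ℙ) {q | 0 < D q}).toReal - ((ℙ.prod ℙ) {q | D q < 0}).toReal)
    / (1 - ((ℙ.prod ℙ) {q | D q = 0}).toReal)

/-- If Goodman–Kruskal's gamma vanishes for every pair of bijective
relabelings of the values of X and Y, then X and Y are independent. -/
theorem gamma_zero_all_numberings_implies_indep
    {Ω : Type*} [MeasurableSpace Ω] (ℙ : Measure Ω) [IsProbabilityMeasure ℙ]
    (a b : ℕ) (ha : 2 ≤ a) (hb : 2 ≤ b)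
    (X : Ω → Fin a) (Y : Ω → Fin b) (hX : Measurable X) (hY : Measurable Y)
    (hXpos : ∀ i, 0 < (ℙ {ω | X ω = i}).toReal)
    (hYpos : ∀ j, 0 < (ℙ {ω | Y ω = j}).toReal)
    (hγ : ∀ (sa : Equiv.Perm (Fin a)) (sb : Equiv.Perm (Fin b)),
      gammaOf ℙ (concKernel X Y sa sb) = 0) :
    ProbabilityTheory.IndepFun X Y ℙ := by
  classical
  set P : Fin a → Fin b → ℝ := fun i j => (ℙ (GKaux.cell X Y i j)).toReal with hPdef
  have hfin : ∀ i j, ℙ (GKaux.cell X Y i j) ≠ ⊤ := fun i j => measure_ne_top ℙ _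
  have hPnn : ∀ i j, 0 ≤ P i j := fun i j => ENNReal.toReal_nonneg
  have hrow : ∀ i, (ℙ {ω | X ω = i}).toReal = ∑ j, P i j := by
    intro i
    rw [GKaux.row_marginal ℙ X Y hX hY i, ENNReal.toReal_sum (fun j _ => hfin i j)]
  have hcol : ∀ j, (ℙ {ω | Y ω = j}).toReal = ∑ i, P i j := by
    intro j
    rw [GKaux.col_marginal ℙ X Y hX hY j, ENNReal.toReal_sum (fun i _ => hfin i j)]
  have htot : ∑ i, ∑ j, P i j = 1 := by
    have h1 : ∑ i, ∑ j, P i j = ∑ i, (ℙ {ω | X ω = i}).toReal := by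
      refine Finset.sum_congr rfl fun i _ => (hrow i).symm
    rw [h1, ← ENNReal.toReal_sum (fun i _ => measure_ne_top ℙ _)]
    have h2 : ∑ i : Fin a, ℙ {ω | X ω = i}
        = ∑ i : Fin a, ∑ j : Fin b, ℙ (GKaux.cell X Y i j) := by
      refine Finset.sum_congr rfl fun i _ => GKaux.row_marginal ℙ X Y hX hY i
    rw [h2, GKaux.total_one ℙ X Y hX hY]
    simp
  -- toReal decomposition of product events
  have hcondR : ∀ (c : Fin a → Fin b → Fin a → Fin b → Prop),
      ((ℙ.prod ℙ) {q : Ω × Ω | c (X q.1) (Y q.1) (X q.2) (Y q.2)}).toReal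
        = ∑ i, ∑ j, ∑ k, ∑ l, if c i j k l then P i j * P k l else 0 := by
    intro c
    rw [GKaux.measure_cond ℙ X Y hX hY c,
      ENNReal.toReal_sum (fun u _ => by
        split_ifs
        · exact ENNReal.mul_ne_top (hfin _ _) (hfin _ _)
        · simp),
      ← GKaux.reshape (fun i j k l => if c i j k l then P i j * P k l else 0)]
    refine Finset.sum_congr rfl fun u _ => ?_
    split_ifs with h
    · exact ENNReal.toReal_mul
    · simp
  -- events of the concordance kernel
  have hKpos : ∀ (sa : Equiv.Perm (Fin a)) (sb : Equiv.Perm (Fin b)),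
      ((ℙ.prod ℙ) {q | 0 < concKernel X Y sa sb q}).toReal
        = ∑ i, ∑ j, ∑ k, ∑ l,
            if 0 < (((sa i : ℕ) : ℝ) - ((sa k : ℕ) : ℝ)) * (((sb j : ℕ) : ℝ) - ((sb l : ℕ) : ℝ))
            then P i j * P k l else 0 := fun sa sb =>
    hcondR (fun i j k l =>
      0 < (((sa i : ℕ) : ℝ) - ((sa k : ℕ) : ℝ)) * (((sb j : ℕ) : ℝ) - ((sb l : ℕ) : ℝ)))
  have hKneg : ∀ (sa : Equiv.Perm (Fin a)) (sb : Equiv.Perm (Fin b)),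
      ((ℙ.prod ℙ) {q | concKernel X Y sa sb q < 0}).toReal
        = ∑ i, ∑ j, ∑ k, ∑ l,
            if (((sa i : ℕ) : ℝ) - ((sa k : ℕ) : ℝ)) * (((sb j : ℕ) : ℝ) - ((sb l : ℕ) : ℝ)) < 0
            then P i j * P k l else 0 := fun sa sb =>
    hcondR (fun i j k l =>
      (((sa i : ℕ) : ℝ) - ((sa k : ℕ) : ℝ)) * (((sb j : ℕ) : ℝ) - ((sb l : ℕ) : ℝ)) < 0)
  have hz : ∀ (sa : Equiv.Perm (Fin a)) (sb : Equiv.Perm (Fin b)) i j k l,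
      ((((sa i : ℕ) : ℝ) - ((sa k : ℕ) : ℝ)) * (((sb j : ℕ) : ℝ) - ((sb l : ℕ) : ℝ)) = 0)
        ↔ (i = k ∨ j = l) := by
    intro sa sb i j k l
    rw [mul_eq_zero, sub_eq_zero, sub_eq_zero]
    constructor
    · rintro (h | h)
      · exact Or.inl (sa.injective (Fin.ext (Nat.cast_injective h)))
      · exact Or.inr (sb.injective (Fin.ext (Nat.cast_injective h)))
    · rintro (h | h)
      · exact Or.inl (by rw [h])
      · exact Or.inr (by rw [h])
  have hKzero : ∀ (sa : Equiv.Perm (Fin a)) (sb : Equiv.Perm (Fin b)),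
      ((ℙ.prod ℙ) {q | concKernel X Y sa sb q = 0}).toReal
        = ∑ i, ∑ j, ∑ k, ∑ l, if i = k ∨ j = l then P i j * P k l else 0 := by
    intro sa sb
    refine (hcondR (fun i j k l =>
      (((sa i : ℕ) : ℝ) - ((sa k : ℕ) : ℝ)) * (((sb j : ℕ) : ℝ) - ((sb l : ℕ) : ℝ)) = 0)).trans ?_
    refine Finset.sum_congr rfl fun i _ => Finset.sum_congr rfl fun j _ =>
      Finset.sum_congr rfl fun k _ => Finset.sum_congr rfl fun l _ => ?_
    rw [if_congr (hz sa sb i j k l) rfl rfl]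
  -- total of products is 1
  have hprod1 : ∑ i, ∑ j, ∑ k, ∑ l, P i j * P k l = (1 : ℝ) := by
    have : ∑ i, ∑ j, ∑ k, ∑ l, P i j * P k l
        = (∑ i, ∑ j, P i j) * (∑ k, ∑ l, P k l) := by
      simp_rw [← Finset.mul_sum, ← Finset.sum_mul]
    rw [this, htot, one_mul]
  -- witness for positivity
  have hrowpos : ∀ i, ∃ j, 0 < P i j := by
    intro i
    have h := hXpos i
    rw [hrow i] at h
    by_contra hcon
    push_neg at hcon
    have : ∑ j, P i j ≤ 0 := Finset.sum_nonpos fun j _ => hcon j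
    linarith
  have hcolpos : ∀ j, ∃ i, 0 < P i j := by
    intro j
    have h := hYpos j
    rw [hcol j] at h
    by_contra hcon
    push_neg at hcon
    have : ∑ i, P i j ≤ 0 := Finset.sum_nonpos fun i _ => hcon i
    linarith
  obtain ⟨i0, k0, j0, l0, hik, hjl, hPa, hPb⟩ :
      ∃ i k j l, i ≠ k ∧ j ≠ l ∧ 0 < P i j ∧ 0 < P k l := by
    set iz : Fin a := ⟨0, by omega⟩ with hiz
    obtain ⟨jz, hjz⟩ := hrowpos iz
    obtain ⟨lz, hlz⟩ := Fintype.exists_ne_of_one_lt_card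
      (by rw [Fintype.card_fin]; omega) jz
    obtain ⟨kz, hkz⟩ := hcolpos lz
    by_cases hk : kz = iz
    · obtain ⟨isnd, hisnd⟩ := Fintype.exists_ne_of_one_lt_card
        (by rw [Fintype.card_fin]; omega) iz
      obtain ⟨jsnd, hjsnd⟩ := hrowpos isnd
      by_cases hj : jsnd = jz
      · exact ⟨iz, isnd, lz, jsnd, Ne.symm hisnd, by rw [hj]; exact hlz,
          by rw [← hk]; exact hkz, hjsnd⟩
      · exact ⟨iz, isnd, jz, jsnd, Ne.symm hisnd, fun hh => hj hh.symm, hjz, hjsnd⟩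
    · exact ⟨iz, kz, jz, lz, fun hh => hk hh.symm, fun hh => hlz hh.symm, hjz, hkz⟩
  -- positivity of the denominator
  have hdenpos : ∀ (sa : Equiv.Perm (Fin a)) (sb : Equiv.Perm (Fin b)),
      0 < 1 - ((ℙ.prod ℙ) {q | concKernel X Y sa sb q = 0}).toReal := by
    intro sa sb
    rw [hKzero sa sb]
    have hsplit : ∑ i, ∑ j, ∑ k, ∑ l, (if i = k ∨ j = l then P i j * P k l else 0)
        + ∑ i, ∑ j, ∑ k, ∑ l, (if ¬(i = k ∨ j = l) then P i j * P k l else 0) = 1 := by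
      rw [← hprod1, ← Finset.sum_add_distrib]
      refine Finset.sum_congr rfl fun i _ => ?_
      rw [← Finset.sum_add_distrib]
      refine Finset.sum_congr rfl fun j _ => ?_
      rw [← Finset.sum_add_distrib]
      refine Finset.sum_congr rfl fun k _ => ?_
      rw [← Finset.sum_add_distrib]
      refine Finset.sum_congr rfl fun l _ => ?_
      split_ifs with h
      · rw [add_zero]
      · rw [zero_add]
    have hnn4 : ∀ i j k l, 0 ≤ (if ¬(i = k ∨ j = l) then P i j * P k l else 0) := by
      intro i j k l
      split_ifs <;> first
        | exact mul_nonneg (hPnn _ _) (hPnn _ _)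
        | exact le_refl (0 : ℝ)
    have hnn3 : ∀ i j k, 0 ≤ ∑ l, (if ¬(i = k ∨ j = l) then P i j * P k l else 0) :=
      fun i j k => Finset.sum_nonneg fun l _ => hnn4 i j k l
    have hnn2 : ∀ i j, 0 ≤ ∑ k, ∑ l, (if ¬(i = k ∨ j = l) then P i j * P k l else 0) :=
      fun i j => Finset.sum_nonneg fun k _ => hnn3 i j k
    have hnn1 : ∀ i, 0 ≤ ∑ j, ∑ k, ∑ l, (if ¬(i = k ∨ j = l) then P i j * P k l else 0) :=
      fun i => Finset.sum_nonneg fun j _ => hnn2 i j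
    have hterm : 0 < (if ¬(i0 = k0 ∨ j0 = l0) then P i0 j0 * P k0 l0 else 0) := by
      rw [if_pos (by rintro (h | h); exacts [hik h, hjl h])]
      exact mul_pos hPa hPb
    have hpos2 : 0 < ∑ i, ∑ j, ∑ k, ∑ l, (if ¬(i = k ∨ j = l) then P i j * P k l else 0) := by
      refine lt_of_lt_of_le ?_ (Finset.single_le_sum (fun i _ => hnn1 i) (Finset.mem_univ i0))
      refine lt_of_lt_of_le ?_ (Finset.single_le_sum (fun j _ => hnn2 i0 j) (Finset.mem_univ j0))
      refine lt_of_lt_of_le ?_ (Finset.single_le_sum (fun k _ => hnn3 i0 j0 k) (Finset.mem_univ k0))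
      exact lt_of_lt_of_le hterm (Finset.single_le_sum (fun l _ => hnn4 i0 j0 k0 l) (Finset.mem_univ l0))
    linarith
  -- vanishing of the signed sum
  have hnum : ∀ (sa : Equiv.Perm (Fin a)) (sb : Equiv.Perm (Fin b)),
      ∑ i, ∑ j, ∑ k, ∑ l,
        (GKaux.esgn (sa i) (sa k) * GKaux.esgn (sb j) (sb l)) * (P i j * P k l) = 0 := by
    intro sa sb
    have hγ' := hγ sa sb
    unfold gammaOf at hγ'
    have hd := hdenpos sa sb
    rcases div_eq_zero_iff.mp hγ' with h | h
    · rw [hKpos sa sb, hKneg sa sb] at h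
      have hre : ∑ i, ∑ j, ∑ k, ∑ l,
          (GKaux.esgn (sa i) (sa k) * GKaux.esgn (sb j) (sb l)) * (P i j * P k l)
        = (∑ i, ∑ j, ∑ k, ∑ l,
            if 0 < (((sa i : ℕ) : ℝ) - ((sa k : ℕ) : ℝ)) * (((sb j : ℕ) : ℝ) - ((sb l : ℕ) : ℝ))
            then P i j * P k l else 0)
          - ∑ i, ∑ j, ∑ k, ∑ l,
            if (((sa i : ℕ) : ℝ) - ((sa k : ℕ) : ℝ)) * (((sb j : ℕ) : ℝ) - ((sb l : ℕ) : ℝ)) < 0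
            then P i j * P k l else 0 := by
        rw [← Finset.sum_sub_distrib]
        refine Finset.sum_congr rfl fun i _ => ?_
        rw [← Finset.sum_sub_distrib]
        refine Finset.sum_congr rfl fun j _ => ?_
        rw [← Finset.sum_sub_distrib]
        refine Finset.sum_congr rfl fun k _ => ?_
        rw [← Finset.sum_sub_distrib]
        refine Finset.sum_congr rfl fun l _ => ?_
        rw [← GKaux.bridge (sa i) (sa k) (sb j) (sb l)]
        split_ifs <;> ring
      rw [hre]
      exact h
    · exact absurd h (ne_of_gt hd)
  -- reorganize
  have hnum2 : ∀ (sa : Equiv.Perm (Fin a)) (sb : Equiv.Perm (Fin b)),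
      ∑ i, ∑ k, GKaux.esgn (sa i) (sa k)
        * (∑ j, ∑ l, GKaux.esgn (sb j) (sb l) * (P i j * P k l)) = 0 := by
    intro sa sb
    calc ∑ i, ∑ k, GKaux.esgn (sa i) (sa k)
          * (∑ j, ∑ l, GKaux.esgn (sb j) (sb l) * (P i j * P k l))
        = ∑ i, ∑ k, ∑ j, ∑ l,
            (GKaux.esgn (sa i) (sa k) * GKaux.esgn (sb j) (sb l)) * (P i j * P k l) := by
          refine Finset.sum_congr rfl fun i _ => Finset.sum_congr rfl fun k _ => ?_
          rw [Finset.mul_sum]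
          refine Finset.sum_congr rfl fun j _ => ?_
          rw [Finset.mul_sum]
          refine Finset.sum_congr rfl fun l _ => ?_
          ring
      _ = ∑ i, ∑ j, ∑ k, ∑ l,
            (GKaux.esgn (sa i) (sa k) * GKaux.esgn (sb j) (sb l)) * (P i j * P k l) := by
          refine Finset.sum_congr rfl fun i _ => ?_
          exact Finset.sum_comm
      _ = 0 := hnum sa sb
  -- first cancellation
  have hg0 : ∀ (sb : Equiv.Perm (Fin b)) (i k : Fin a), i ≠ k →
      (∑ j, ∑ l, GKaux.esgn (sb j) (sb l) * (P i j * P k l)) = 0 := by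
    intro sb i k hik2
    have hsym := GKaux.key_cancel
      (fun i k => ∑ j, ∑ l, GKaux.esgn (sb j) (sb l) * (P i j * P k l))
      (fun sa => hnum2 sa sb) hik2
    have hanti : (∑ j, ∑ l, GKaux.esgn (sb j) (sb l) * (P k j * P i l))
        = - ∑ j, ∑ l, GKaux.esgn (sb j) (sb l) * (P i j * P k l) := by
      calc ∑ j, ∑ l, GKaux.esgn (sb j) (sb l) * (P k j * P i l)
          = ∑ l, ∑ j, GKaux.esgn (sb j) (sb l) * (P k j * P i l) := Finset.sum_comm
        _ = ∑ j, ∑ l, GKaux.esgn (sb l) (sb j) * (P k l * P i j) := rfl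
        _ = ∑ j, ∑ l, -(GKaux.esgn (sb j) (sb l) * (P i j * P k l)) := by
            refine Finset.sum_congr rfl fun j _ => Finset.sum_congr rfl fun l _ => ?_
            rw [GKaux.esgn_antisymm]
            ring
        _ = - ∑ j, ∑ l, GKaux.esgn (sb j) (sb l) * (P i j * P k l) := by
            rw [← Finset.sum_neg_distrib]
            refine Finset.sum_congr rfl fun j _ => ?_
            rw [← Finset.sum_neg_distrib]
      -- done
    linarith [hsym, hanti]
  -- second cancellation
  have hcross : ∀ i k j l, P i j * P k l = P i l * P k j := by
    intro i k j l
    rcases eq_or_ne i k with rfl | hik2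
    · ring
    rcases eq_or_ne j l with rfl | hjl2
    · ring
    have h := GKaux.key_cancel (fun j l => P i j * P k l)
      (fun sb => hg0 sb i k hik2) hjl2
    exact h
  -- factorization in ℝ
  have hfact : ∀ i j, P i j = (∑ l, P i l) * (∑ k, P k j) := by
    intro i j
    have h1 : P i j * (∑ k, ∑ l, P k l) = (∑ l, P i l) * (∑ k, P k j) := by
      calc P i j * (∑ k, ∑ l, P k l) = ∑ k, ∑ l, P i j * P k l := by
            rw [Finset.mul_sum]
            refine Finset.sum_congr rfl fun k _ => ?_
            rw [Finset.mul_sum]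
        _ = ∑ k, ∑ l, P i l * P k j := by
            refine Finset.sum_congr rfl fun k _ => Finset.sum_congr rfl fun l _ => ?_
            exact hcross i k j l
        _ = ∑ k, (∑ l, P i l) * P k j := by
            refine Finset.sum_congr rfl fun k _ => ?_
            rw [Finset.sum_mul]
        _ = (∑ l, P i l) * ∑ k, P k j := by rw [← Finset.mul_sum]
    rw [htot] at h1
    rw [mul_one] at h1
    exact h1
  -- factorization in ℝ≥0∞
  have hfactE : ∀ i j, ℙ (GKaux.cell X Y i j) = ℙ {ω | X ω = i} * ℙ {ω | Y ω = j} := by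
    intro i j
    have hR : (ℙ (GKaux.cell X Y i j)).toReal
        = ((ℙ {ω | X ω = i}) * (ℙ {ω | Y ω = j})).toReal := by
      rw [ENNReal.toReal_mul]
      calc (ℙ (GKaux.cell X Y i j)).toReal = P i j := rfl
        _ = (∑ l, P i l) * (∑ k, P k j) := hfact i j
        _ = (ℙ {ω | X ω = i}).toReal * (ℙ {ω | Y ω = j}).toReal := by
            rw [hrow i, hcol j]
    exact (ENNReal.toReal_eq_toReal_iff' (measure_ne_top _ _)
      (ENNReal.mul_ne_top (measure_ne_top _ _) (measure_ne_top _ _))).mp hR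
  -- conclude independence
  rw [ProbabilityTheory.indepFun_iff_measure_inter_preimage_eq_mul]
  intro s t _ _
  have hZ : Measurable fun ω => (X ω, Y ω) := hX.prodMk hY
  have hint : X ⁻¹' s ∩ Y ⁻¹' t = (fun ω => (X ω, Y ω)) ⁻¹' (s ×ˢ t) := by
    ext ω; simp
  rw [hint, GKaux.meas_fiber ℙ _ hZ (s ×ˢ t),
    GKaux.meas_fiber ℙ X hX s, GKaux.meas_fiber ℙ Y hY t,
    Finset.sum_mul_sum, Fintype.sum_prod_type]
  refine Finset.sum_congr rfl fun i _ => Finset.sum_congr rfl fun j _ => ?_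
  have hcell : (fun ω => (X ω, Y ω)) ⁻¹' {(i, j)} = GKaux.cell X Y i j := by
    ext ω; simp [GKaux.cell, Prod.ext_iff]
  have e1 : X ⁻¹' {i} = {ω | X ω = i} := by ext ω; simp
  have e2 : Y ⁻¹' {j} = {ω | Y ω = j} := by ext ω; simp
  by_cases h1 : i ∈ s <;> by_cases h2 : j ∈ t <;>
    simp [h1, h2, Set.mem_prod, hcell, hfactE i j, e1, e2]
end

section
/- Let X take finitely many values ω'_1,…,ω'_a and Y be real-valued, and suppose Y = b_1 + Σ_{j=2}^a b_j · 1{X = ω'_j} + U almost surely, where U is independent of X and non-degenerate. Then X and Y are independent if and only if b_j = 0 for all j ∈ {2,…,a}. -/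
open MeasureTheory Filter

lemma no_shift {Ω : Type*} [MeasurableSpace Ω] (ℙ : Measure Ω) [IsProbabilityMeasure ℙ]
    (U : Ω → ℝ) (hU : Measurable U) (c : ℝ) (hc : c ≠ 0)
    (h : ∀ t : ℝ, ℙ {ω | U ω ≤ t} = ℙ {ω | U ω ≤ t - c}) : False := by
  set d := |c| with hd
  have hd0 : 0 < d := abs_pos.2 hc
  have hstep : ∀ t : ℝ, ℙ {ω | U ω ≤ t} = ℙ {ω | U ω ≤ t - d} := by
    intro t
    rcases abs_cases c with ⟨h1, _⟩ | ⟨h1, _⟩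
    · rw [hd, h1]; exact h t
    · have h2 := h (t - d)
      rw [show t - d - c = t by rw [hd, h1]; ring] at h2
      exact h2.symm
  have hiter : ∀ (n : ℕ) (t : ℝ), ℙ {ω | U ω ≤ t} = ℙ {ω | U ω ≤ t - n * d} := by
    intro n
    induction n with
    | zero => intro t; simp
    | succ n ih =>
      intro t
      rw [hstep t, ih (t - d),
        show t - d - (n : ℝ) * d = t - ((n + 1 : ℕ) : ℝ) * d by push_cast; ring]
  have h0 : ∀ t : ℝ, ℙ {ω | U ω ≤ t} = 0 := by
    intro t
    have hmeas : ∀ n : ℕ, MeasurableSet {ω | U ω ≤ t - n * d} := fun n =>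
      hU measurableSet_Iic
    have hanti : Antitone (fun n : ℕ => {ω | U ω ≤ t - n * d}) := by
      intro m n hmn ω hω
      simp only [Set.mem_setOf_eq] at *
      have : t - n * d ≤ t - m * d := by
        have : (m : ℝ) * d ≤ n * d := by
          apply mul_le_mul_of_nonneg_right _ hd0.le
          exact_mod_cast hmn
        linarith
      linarith
    have hempty : (⋂ n : ℕ, {ω | U ω ≤ t - n * d}) = ∅ := by
      ext ω
      simp only [Set.mem_iInter, Set.mem_setOf_eq, Set.mem_empty_iff_false, iff_false, not_forall]
      obtain ⟨n, hn⟩ := exists_nat_gt ((t - U ω) / d)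
      refine ⟨n, ?_⟩
      rw [div_lt_iff₀ hd0] at hn
      push_neg
      linarith
    have htend : Tendsto (fun n : ℕ => ℙ {ω | U ω ≤ t - n * d}) atTop
        (nhds (ℙ (⋂ n : ℕ, {ω | U ω ≤ t - n * d}))) := by
      apply tendsto_measure_iInter_atTop (fun n => (hmeas n).nullMeasurableSet) hanti
      exact ⟨0, measure_ne_top _ _⟩
    rw [hempty] at htend
    simp only [measure_empty] at htend
    have hconst : (fun n : ℕ => ℙ {ω | U ω ≤ t - n * d}) = fun _ => ℙ {ω | U ω ≤ t} := by
      funext n; exact (hiter n t).symm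
    rw [hconst] at htend
    exact tendsto_nhds_unique tendsto_const_nhds htend
  have huniv : (Set.univ : Set Ω) = ⋃ n : ℕ, {ω | U ω ≤ n} := by
    ext ω
    simp only [Set.mem_univ, Set.mem_iUnion, Set.mem_setOf_eq, true_iff]
    exact exists_nat_ge (U ω)
  have : (ℙ Set.univ) = 0 := by
    rw [huniv]
    exact measure_iUnion_null fun n => h0 n
  simp [measure_univ] at this

/-- In the regression Y = b₁ + Σ_{j≥2} b_j 1{X = ω'_j} + U a.s. with U
independent of X and non-degenerate, X and Y are independent iff all slope coefficients
b_j (j ≥ 2) vanish. -/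
theorem indep_iff_slopes_zero
    {Ω : Type*} [MeasurableSpace Ω] (ℙ : Measure Ω) [IsProbabilityMeasure ℙ]
    (a : ℕ) (ha : 0 < a)
    (X : Ω → Fin a) (U : Ω → ℝ) (Y : Ω → ℝ)
    (hX : Measurable X) (hU : Measurable U) (hYm : Measurable Y)
    (hpos : ∀ j, ℙ {ω | X ω = j} ≠ 0)
    (hindep : ProbabilityTheory.IndepFun X U ℙ)
    (hnondeg : ¬ ∃ c : ℝ, ∀ᵐ ω ∂ℙ, U ω = c)
    (b : Fin a → ℝ)
    (hY : ∀ᵐ ω ∂ℙ, Y ω = b ⟨0, ha⟩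
        + (∑ j ∈ Finset.univ.filter (fun j => j ≠ (⟨0, ha⟩ : Fin a)),
            b j * (if X ω = j then 1 else 0))
        + U ω) :
    ProbabilityTheory.IndepFun X Y ℙ ↔ ∀ j, j ≠ (⟨0, ha⟩ : Fin a) → b j = 0 := by
  set z : Fin a := ⟨0, ha⟩ with hz
  -- pointwise value of Y on {X = k}
  have hYk : ∀ k : Fin a, ∀ᵐ ω ∂ℙ, X ω = k →
      Y ω = (b z + (if k = z then 0 else b k)) + U ω := by
    intro k
    filter_upwards [hY] with ω hω hXω
    rw [hω, hXω]
    congr 2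
    have : ∀ j : Fin a, b j * (if k = j then (1:ℝ) else 0) = if k = j then b j else 0 := by
      intro j; split <;> simp
    simp only [this]
    rw [Finset.sum_ite_eq]
    simp only [Finset.mem_filter, Finset.mem_univ, true_and]
    by_cases hk : k = z
    · simp [hk]
    · simp [hk]
  constructor
  · -- forward direction
    intro hXY
    by_contra hne
    push_neg at hne
    obtain ⟨j, hjz, hbj⟩ := hne
    -- constant on {X = k}
    set c : Fin a → ℝ := fun k => b z + (if k = z then 0 else b k) with hc
    have key : ∀ (k : Fin a) (t : ℝ), ℙ {ω | Y ω ≤ t} = ℙ {ω | U ω ≤ t - c k} := by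
      intro k t
      have hsetae : ({ω | X ω = k} ∩ {ω | Y ω ≤ t} : Set Ω)
          =ᵐ[ℙ] ({ω | X ω = k} ∩ {ω | U ω ≤ t - c k} : Set Ω) := by
        rw [Filter.eventuallyEq_set]
        filter_upwards [hYk k] with ω hω
        simp only [Set.mem_inter_iff, Set.mem_setOf_eq]
        have hck : c k = b z + (if k = z then 0 else b k) := rfl
        constructor
        · rintro ⟨h1, h2⟩
          refine ⟨h1, ?_⟩
          rw [hω h1] at h2
          linarith [hck]
        · rintro ⟨h1, h2⟩
          refine ⟨h1, ?_⟩
          rw [hω h1]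
          linarith [hck]
      have hiU : ProbabilityTheory.IndepFun X (fun ω => U ω) ℙ := hindep
      have e1 : ℙ ({ω | X ω = k} ∩ {ω | Y ω ≤ t}) = ℙ {ω | X ω = k} * ℙ {ω | Y ω ≤ t} := by
        have := hXY.measure_inter_preimage_eq_mul ({k} : Set (Fin a)) (Set.Iic t)
          (measurableSet_singleton k) measurableSet_Iic
        simpa [Set.preimage, Set.Iic] using this
      have e2 : ℙ ({ω | X ω = k} ∩ {ω | U ω ≤ t - c k})
          = ℙ {ω | X ω = k} * ℙ {ω | U ω ≤ t - c k} := by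
        have := hindep.measure_inter_preimage_eq_mul ({k} : Set (Fin a)) (Set.Iic (t - c k))
          (measurableSet_singleton k) measurableSet_Iic
        simpa [Set.preimage, Set.Iic] using this
      have := measure_congr hsetae
      rw [e1, e2] at this
      exact (ENNReal.mul_right_inj (hpos k) (measure_ne_top _ _)).mp this
    -- compare k = z and k = j
    have hshift : ∀ s : ℝ, ℙ {ω | U ω ≤ s} = ℙ {ω | U ω ≤ s - b j} := by
      intro s
      have h1 := key z (s + b z)
      have h2 := key j (s + b z)
      rw [h1] at h2
      have hcz : c z = b z := by simp [hc]
      have hcj : c j = b z + b j := by simp [hc, hjz]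
      rw [hcz, hcj] at h2
      simpa [add_sub_cancel_right, show s + b z - (b z + b j) = s - b j by ring] using h2
    exact absurd (no_shift ℙ U hU (b j) hbj hshift) (fun h => h)
  · -- reverse direction
    intro hb
    have hY0 : Y =ᵐ[ℙ] fun ω => b z + U ω := by
      filter_upwards [hY] with ω hω
      rw [hω]
      have : ∀ j ∈ Finset.univ.filter (fun j => j ≠ z),
          b j * (if X ω = j then (1:ℝ) else 0) = 0 := by
        intro j hj
        simp only [Finset.mem_filter, Finset.mem_univ, true_and] at hj
        rw [hb j hj]
        ring
      rw [Finset.sum_eq_zero this]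
      ring
    have : ProbabilityTheory.IndepFun X (fun ω => b z + U ω) ℙ :=
      hindep.comp measurable_id (measurable_const_add (b z))
    exact this.congr (Filter.EventuallyEq.refl _ _) hY0.symm
end
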